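/- arXiv:2604.23922 — 2 statements merged into one kernel-verified Lean document; each statement's English description precedes it below -/
import Mathlib

section
/- Let H be a symmetric positive definite n×n real matrix and let s, y ∈ ℝⁿ satisfy yᵀs > 0. Writing ρ = 1/(yᵀs), the inverse BFGS update H⁺ = (I − ρ s yᵀ) H (I − ρ y sᵀ) + ρ s sᵀ is symmetric and positive definite. -/
open Matrix

lemma vmv_t {n : ℕ} (a b : Fin n → ℝ) : (vecMulVec a b)ᵀ = vecMulVec b a := by
  ext i j; simp [vecMulVec_apply, mul_comm]

lemma vmv_mulVec {n : ℕ} (a b x : Fin n → ℝ) :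
    vecMulVec a b *ᵥ x = (b ⬝ᵥ x) • a := by
  ext i
  simp [mulVec, dotProduct, vecMulVec_apply, Finset.mul_sum, mul_comm, mul_left_comm, Finset.sum_mul]

/-- For a symmetric positive definite `H` and vectors `s`, `y` with
`yᵀs > 0`, writing `ρ = 1/(yᵀs)`, the inverse BFGS update
`H⁺ = (I − ρ s yᵀ) H (I − ρ y sᵀ) + ρ s sᵀ` is symmetric and positive definite. -/
theorem inverse_bfgs_update_posDef {n : ℕ} (H : Matrix (Fin n) (Fin n) ℝ)
    (hH : H.PosDef) (s y : Fin n → ℝ) (hys : 0 < y ⬝ᵥ s) :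
    ((1 - (y ⬝ᵥ s)⁻¹ • vecMulVec s y) * H * (1 - (y ⬝ᵥ s)⁻¹ • vecMulVec y s)
        + (y ⬝ᵥ s)⁻¹ • vecMulVec s s).IsSymm ∧
    ((1 - (y ⬝ᵥ s)⁻¹ • vecMulVec s y) * H * (1 - (y ⬝ᵥ s)⁻¹ • vecMulVec y s)
        + (y ⬝ᵥ s)⁻¹ • vecMulVec s s).PosDef := by
  set ρ := (y ⬝ᵥ s)⁻¹ with hρ
  have hρpos : 0 < ρ := inv_pos.mpr hys
  have hHt : Hᵀ = H := hH.isHermitian.eq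
  set A := (1 : Matrix (Fin n) (Fin n) ℝ) - ρ • vecMulVec s y with hA
  have hAt : Aᵀ = 1 - ρ • vecMulVec y s := by
    simp [hA, transpose_sub, transpose_smul, vmv_t]
  have hsymm : ((A * H * Aᵀ) + ρ • vecMulVec s s).IsSymm := by
    rw [Matrix.IsSymm]
    simp [transpose_add, transpose_mul, transpose_smul, vmv_t, hHt, mul_assoc]
  rw [← hAt]
  refine ⟨hsymm, ?_⟩
  have hherm : ((A * H * Aᵀ) + ρ • vecMulVec s s).IsHermitian := by
    rw [Matrix.IsHermitian, conjTranspose_eq_transpose_of_trivial]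
    exact hsymm
  refine PosDef.of_dotProduct_mulVec_pos hherm (fun x hx => ?_)
  have hq : x ⬝ᵥ ((A * H * Aᵀ + ρ • vecMulVec s s) *ᵥ x)
      = (Aᵀ *ᵥ x) ⬝ᵥ (H *ᵥ (Aᵀ *ᵥ x)) + ρ * (s ⬝ᵥ x) ^ 2 := by
    rw [add_mulVec, dotProduct_add, smul_mulVec, vmv_mulVec, dotProduct_smul,
      dotProduct_smul, dotProduct_comm s x]
    have hvA : x ᵥ* A = Aᵀ *ᵥ x := by
      rw [← transpose_transpose A, vecMul_transpose, transpose_transpose]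
    congr 1
    · rw [← mulVec_mulVec, ← mulVec_mulVec, dotProduct_mulVec x A, hvA]
    · simp only [smul_eq_mul, dotProduct_comm x s]; ring
  have key : 0 < (Aᵀ *ᵥ x) ⬝ᵥ (H *ᵥ (Aᵀ *ᵥ x)) + ρ * (s ⬝ᵥ x) ^ 2 := by
    by_cases hw : Aᵀ *ᵥ x = 0
    · have hwx : x = ρ • (s ⬝ᵥ x) • y := by
        have h := hw
        rw [hAt, sub_mulVec, one_mulVec, smul_mulVec, vmv_mulVec, sub_eq_zero] at h
        exact h
      have hsx : s ⬝ᵥ x ≠ 0 := by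
        intro h0
        exact hx (by rw [hwx, h0, zero_smul, smul_zero])
      have : 0 < ρ * (s ⬝ᵥ x) ^ 2 := by positivity
      simpa [hw] using this
    · have h1 := hH.dotProduct_mulVec_pos hw
      have h2 : 0 ≤ ρ * (s ⬝ᵥ x) ^ 2 := by positivity
      have : (Aᵀ *ᵥ x) ⬝ᵥ (H *ᵥ (Aᵀ *ᵥ x)) = star (Aᵀ *ᵥ x) ⬝ᵥ (H *ᵥ (Aᵀ *ᵥ x)) := by simp
      rw [this]; linarith
  have hstar : star x = x := by simp
  rw [hstar, hq]
  exact key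
end

section
/- Let f : ℝⁿ → ℝ be twice continuously differentiable and let H̄ be a symmetric positive definite matrix with ∇²f(z) ≤ H̄ in the Loewner ordering for all z. Then the Simplified Fixed Hessian update x⁺ = x − H̄⁻¹ ∇f(x) satisfies f(x⁺) ≤ f(x) − ½ ∇f(x)ᵀ H̄⁻¹ ∇f(x); in particular the iteration monotonically decreases f, with strict decrease whenever ∇f(x) ≠ 0. -/
open Matrix

/-- If `f` is twice continuously differentiable with gradient `g`
and the symmetric positive definite matrix `H̄` is a Loewner upper bound of the
Hessian of `f` everywhere, then the Simplified Fixed Hessian update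
`x⁺ = x − H̄⁻¹ ∇f(x)` satisfies `f(x⁺) ≤ f(x) − ½ ∇f(x)ᵀ H̄⁻¹ ∇f(x)`; in
particular the decrease is strict whenever `∇f(x) ≠ 0`. -/
theorem sfh_monotone_decrease {n : ℕ} (f : (Fin n → ℝ) → ℝ)
    (hf : ContDiff ℝ 2 f) (g : (Fin n → ℝ) → (Fin n → ℝ))
    (hg : ∀ z v, fderiv ℝ f z v = g z ⬝ᵥ v)
    (H : Matrix (Fin n) (Fin n) ℝ) (hHpd : H.PosDef)
    (hbound : ∀ z v : Fin n → ℝ,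
      fderiv ℝ (fun w => fderiv ℝ f w v) z v ≤ v ⬝ᵥ (H *ᵥ v))
    (x : Fin n → ℝ) :
    f (x - H⁻¹ *ᵥ g x) ≤ f x - (1/2) * (g x ⬝ᵥ (H⁻¹ *ᵥ g x)) ∧
    (g x ≠ 0 → f (x - H⁻¹ *ᵥ g x) < f x) := by
  classical
  set d : Fin n → ℝ := -(H⁻¹ *ᵥ g x) with hd
  set s : ℝ := g x ⬝ᵥ (H⁻¹ *ᵥ g x) with hs
  -- basic matrix facts
  have hdet : IsUnit H.det := isUnit_iff_ne_zero.mpr hHpd.det_pos.ne'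
  have hHHinv : H * H⁻¹ = 1 := Matrix.mul_nonsing_inv H hdet
  have hK : d ⬝ᵥ (H *ᵥ d) = s := by
    rw [hd, hs]
    rw [Matrix.mulVec_neg, dotProduct_neg, neg_dotProduct, neg_neg,
      Matrix.mulVec_mulVec, hHHinv, Matrix.one_mulVec, dotProduct_comm]
  -- differentiability setup
  have hf1 : ContDiff ℝ 1 f := hf.of_le (by norm_num)
  have hfdiff : Differentiable ℝ f := hf1.differentiable one_ne_zero
  have hfd : ContDiff ℝ 1 (fderiv ℝ f) := hf.fderiv_right (by norm_num)
  have hGdiff : Differentiable ℝ (fun w => fderiv ℝ f w d) :=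
    (hfd.clm_apply contDiff_const).differentiable one_ne_zero
  -- the line
  set ℓ : ℝ → (Fin n → ℝ) := fun t => x + t • d with hℓ
  have hℓderiv : ∀ t : ℝ, HasDerivAt ℓ d t := by
    intro t
    have h1 : HasDerivAt (fun t : ℝ => t • d) ((1:ℝ) • d) t :=
      (hasDerivAt_id t).smul_const d
    simpa [hℓ, one_smul] using h1.const_add x
  set φ : ℝ → ℝ := fun t => f (ℓ t) with hφ
  set ψ : ℝ → ℝ := fun t => fderiv ℝ f (ℓ t) d with hψ
  have hφderiv : ∀ t : ℝ, HasDerivAt φ (ψ t) t := fun t =>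
    ((hfdiff (ℓ t)).hasFDerivAt.comp_hasDerivAt t (hℓderiv t))
  have hψderiv : ∀ t : ℝ, HasDerivAt ψ
      (fderiv ℝ (fun w => fderiv ℝ f w d) (ℓ t) d) t := fun t =>
    ((hGdiff (ℓ t)).hasFDerivAt.comp_hasDerivAt t (hℓderiv t))
  -- step A: ψ t ≤ ψ 0 + t * s for t ∈ [0,1]
  have stepA : ∀ t ∈ Set.Icc (0:ℝ) 1, ψ t ≤ ψ 0 + t * s := by
    have hanti : AntitoneOn (fun t => ψ t - t * s) (Set.Icc (0:ℝ) 1) := by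
      apply antitoneOn_of_deriv_nonpos (convex_Icc 0 1)
      · exact Continuous.continuousOn (by
          have : Continuous ψ := by
            fun_prop
          fun_prop)
      · intro t ht
        exact ((hψderiv t).sub ((hasDerivAt_id t).mul_const s)).differentiableAt.differentiableWithinAt
      · intro t ht
        have h := ((hψderiv t).sub (by
          simpa using (hasDerivAt_id t).mul_const s)).deriv
        rw [show (fun t => ψ t - t * s) = ψ - fun y => y * s from rfl, h]
        have := hbound (ℓ t) d
        rw [hK] at this
        linarith
    intro t ht
    have h0 : (0:ℝ) ∈ Set.Icc (0:ℝ) 1 := by constructor <;> norm_num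
    have := hanti h0 ht ht.1
    simp only [zero_mul, sub_zero] at this
    linarith [this]
  -- step B: φ 1 ≤ φ 0 + ψ 0 + s/2
  have stepB : φ 1 ≤ φ 0 + ψ 0 + s / 2 := by
    have hanti : AntitoneOn (fun t => φ t - (t * ψ 0 + t^2 / 2 * s)) (Set.Icc (0:ℝ) 1) := by
      apply antitoneOn_of_deriv_nonpos (convex_Icc 0 1)
      · apply Continuous.continuousOn
        have : Continuous φ := by fun_prop
        fun_prop
      · intro t ht
        have hder : HasDerivAt (fun t => φ t - (t * ψ 0 + t^2 / 2 * s))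
            (ψ t - (ψ 0 + t * s)) t := by
          have h2 : HasDerivAt (fun t : ℝ => t * ψ 0 + t^2 / 2 * s) (ψ 0 + t * s) t := by
            have ha : HasDerivAt (fun t : ℝ => t * ψ 0) (ψ 0) t := by
              simpa using (hasDerivAt_id t).mul_const (ψ 0)
            have hb : HasDerivAt (fun t : ℝ => t^2 / 2 * s) (t * s) t := by
              have : HasDerivAt (fun t : ℝ => t^2 / 2) t t := by
                have := (hasDerivAt_pow 2 t).div_const 2
                simpa [pow_one] using this
              simpa using this.mul_const s
            exact ha.add hb
          exact (hφderiv t).sub h2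
        exact hder.differentiableAt.differentiableWithinAt
      · intro t ht
        have htmem : t ∈ Set.Icc (0:ℝ) 1 := by
          have := interior_subset (s := Set.Icc (0:ℝ) 1) ht
          exact this
        have hder : HasDerivAt (fun t => φ t - (t * ψ 0 + t^2 / 2 * s))
            (ψ t - (ψ 0 + t * s)) t := by
          have h2 : HasDerivAt (fun t : ℝ => t * ψ 0 + t^2 / 2 * s) (ψ 0 + t * s) t := by
            have ha : HasDerivAt (fun t : ℝ => t * ψ 0) (ψ 0) t := by
              simpa using (hasDerivAt_id t).mul_const (ψ 0)
            have hb : HasDerivAt (fun t : ℝ => t^2 / 2 * s) (t * s) t := by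
              have : HasDerivAt (fun t : ℝ => t^2 / 2) t t := by
                have := (hasDerivAt_pow 2 t).div_const 2
                simpa [pow_one] using this
              simpa using this.mul_const s
            exact ha.add hb
          exact (hφderiv t).sub h2
        rw [hder.deriv]
        have := stepA t htmem
        linarith
    have h0 : (0:ℝ) ∈ Set.Icc (0:ℝ) 1 := by constructor <;> norm_num
    have h1 : (1:ℝ) ∈ Set.Icc (0:ℝ) 1 := by constructor <;> norm_num
    have := hanti h0 h1 (by norm_num)
    simp only [one_mul, one_pow, zero_mul, sub_zero] at this
    nlinarith [this]
  -- identify the pieces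
  have hψ0 : ψ 0 = -s := by
    show fderiv ℝ f (ℓ 0) d = -s
    have hℓ0 : ℓ 0 = x := by simp [hℓ]
    rw [hℓ0, hg x d, hd, hs, dotProduct_neg]
  have hφ0 : φ 0 = f x := by simp [hφ, hℓ]
  have hφ1 : φ 1 = f (x - H⁻¹ *ᵥ g x) := by
    simp [hφ, hℓ, hd, sub_eq_add_neg]
  have hmain : f (x - H⁻¹ *ᵥ g x) ≤ f x - (1/2) * s := by
    rw [← hφ1, ]
    rw [hψ0, hφ0] at stepB
    linarith
  refine ⟨hmain, fun hne => ?_⟩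
  have hspos : 0 < s := by
    have := hHpd.inv.dotProduct_mulVec_pos hne
    simpa [hs] using this
  calc f (x - H⁻¹ *ᵥ g x) ≤ f x - (1/2) * s := hmain
    _ < f x := by linarith
end
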